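/- Let F be a field of characteristic zero, V an n-dimensional F-vector space, W = V ⊕ F·e₀, and e₀* ∈ W* the linear form with e₀*(e₀) = 1 and e₀*(V) = 0. Identify GL(V) with the subgroup of GL(W) consisting of elements fixing e₀ and stabilizing V. Let Y, Y' ∈ End(W) and assume Y is regular semisimple, i.e. the determinant of the (n+1)×(n+1) matrix with (i,j) entry e₀*(Y^{i+j}(e₀)), 0 ≤ i,j ≤ n, is nonzero. Then the following are equivalent: (a) there exists g ∈ GL(V) with Y' = g Y g⁻¹; (b) Y and Y' have the same characteristic polynomial and e₀*(Y^i(e₀)) = e₀*(Y'^i(e₀)) for all 0 ≤ i ≤ n. Moreover, when these hold, the element g ∈ GL(V) with Y' = g Y g⁻¹ is unique. -/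

import Mathlib

open Polynomial LinearMap Module

section Aux

variable {F : Type*} [Field F] {V : Type*} [AddCommGroup V] [Module F V]
  [FiniteDimensional F V] {n : ℕ}

/-- Power recurrence from Cayley–Hamilton: for an endomorphism `Z` with characteristic
polynomial of degree `n+1`, the power `Z^(n+1+k)` is a combination of `Z^(j+k)`, `j ≤ n`. -/
lemma aux_pow_rec (Z : (V × F) →ₗ[F] (V × F)) (hd : Z.charpoly.natDegree = n + 1) (k : ℕ) :
    Z ^ (n + 1 + k) =
      ∑ j ∈ Finset.range (n + 1), (X ^ (n + 1) - Z.charpoly).coeff j • Z ^ (j + k) := by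
  set q : F[X] := X ^ (n + 1) - Z.charpoly with hq
  have hqd : q.natDegree < n + 1 := by
    rcases eq_or_ne q 0 with h | h
    · simp [h]
    · have h1 : (X ^ (n + 1) : F[X]).degree = ((n + 1 : ℕ) : WithBot ℕ) := degree_X_pow _
      have h2 : Z.charpoly.degree = ((n + 1 : ℕ) : WithBot ℕ) := by
        rw [degree_eq_natDegree Z.charpoly_monic.ne_zero, hd]
      have hlt : q.degree < (X ^ (n + 1) : F[X]).degree :=
        degree_sub_lt (h1.trans h2.symm) (pow_ne_zero _ X_ne_zero)
          (by rw [(monic_X_pow (n + 1)).leadingCoeff, Z.charpoly_monic.leadingCoeff])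
      rw [h1] at hlt
      exact (natDegree_lt_iff_degree_lt h).mpr hlt
  have haev : Polynomial.aeval Z q = Z ^ (n + 1) := by
    simp [hq, map_sub, Z.aeval_self_charpoly]
  have hsum : Z ^ (n + 1) = ∑ j ∈ Finset.range (n + 1), q.coeff j • Z ^ j := by
    rw [← haev, aeval_eq_sum_range' hqd]
  calc Z ^ (n + 1 + k) = Z ^ (n + 1) * Z ^ k := pow_add _ _ _
    _ = (∑ j ∈ Finset.range (n + 1), q.coeff j • Z ^ j) * Z ^ k := by rw [← hsum]
    _ = ∑ j ∈ Finset.range (n + 1), q.coeff j • Z ^ (j + k) := by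
        rw [Finset.sum_mul]
        exact Finset.sum_congr rfl fun j _ => by rw [smul_mul_assoc, pow_add]

end Aux

/-- Let `W = V ⊕ F e₀` (modelled as `V × F`, with `e₀ = (0,1)` and
`e₀* = snd`), and let `GL(V)` act on `End(W)` by conjugation through `g ↦ g ⊕ id`.
For `Y` regular semisimple (i.e. `det ((e₀* (Y^{i+j} e₀)))_{0 ≤ i,j ≤ n} ≠ 0`), an
endomorphism `Y'` is `GL(V)`-conjugate to `Y` iff `Y` and `Y'` have the same characteristic
polynomial and the same invariants `e₀* (Y^i e₀)`, `0 ≤ i ≤ n`; and the conjugating element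
is unique. -/
theorem stmt_9 (F : Type*) [Field F] [CharZero F]
    (V : Type*) [AddCommGroup V] [Module F V] [FiniteDimensional F V]
    (n : ℕ) (hn : Module.finrank F V = n)
    (Y Y' : (V × F) →ₗ[F] (V × F))
    (hreg : (Matrix.of fun i j : Fin (n + 1) =>
        LinearMap.snd F V F ((Y ^ ((i : ℕ) + (j : ℕ))) ((0 : V), (1 : F)))).det ≠ 0) :
    ((∃ g : V ≃ₗ[F] V,
        Y' = (g.toLinearMap.prodMap (LinearMap.id : F →ₗ[F] F)) ∘ₗ Y ∘ₗ
          (g.symm.toLinearMap.prodMap (LinearMap.id : F →ₗ[F] F))) ↔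
      (LinearMap.charpoly Y = LinearMap.charpoly Y' ∧
        ∀ i ≤ n, LinearMap.snd F V F ((Y ^ i) ((0 : V), (1 : F))) =
          LinearMap.snd F V F ((Y' ^ i) ((0 : V), (1 : F))))) ∧
    ∀ g₁ g₂ : V ≃ₗ[F] V,
      Y' = (g₁.toLinearMap.prodMap (LinearMap.id : F →ₗ[F] F)) ∘ₗ Y ∘ₗ
          (g₁.symm.toLinearMap.prodMap (LinearMap.id : F →ₗ[F] F)) →
      Y' = (g₂.toLinearMap.prodMap (LinearMap.id : F →ₗ[F] F)) ∘ₗ Y ∘ₗ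
          (g₂.symm.toLinearMap.prodMap (LinearMap.id : F →ₗ[F] F)) →
      g₁ = g₂ := by
  classical
  set φ := LinearMap.snd F V F with hφdef
  set e0 : V × F := ((0 : V), (1 : F)) with he0
  have hW : Module.finrank F (V × F) = n + 1 := by
    rw [Module.finrank_prod, hn, Module.finrank_self]
  have hcard : Fintype.card (Fin (n + 1)) = Module.finrank F (V × F) := by simp [hW]
  -- independence of the Krylov family from nonvanishing of the Hankel determinant
  have indep : ∀ Z : (V × F) →ₗ[F] (V × F),
      (Matrix.of fun i j : Fin (n + 1) => φ ((Z ^ ((i : ℕ) + (j : ℕ))) e0)).det ≠ 0 →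
      LinearIndependent F fun i : Fin (n + 1) => (Z ^ (i : ℕ)) e0 := by
    intro Z hdet
    rw [Fintype.linearIndependent_iff]
    intro c hc i
    have hmv : (Matrix.of fun i j : Fin (n + 1) =>
        φ ((Z ^ ((i : ℕ) + (j : ℕ))) e0)).mulVec c = 0 := by
      funext i
      have h1 := congrArg (fun w => φ ((Z ^ (i : ℕ)) w)) hc
      simp only [map_sum, map_smul, map_zero] at h1
      have h2 : ∀ j : Fin (n + 1),
          φ ((Z ^ (i : ℕ)) ((Z ^ (j : ℕ)) e0)) = φ ((Z ^ ((i : ℕ) + (j : ℕ))) e0) := by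
        intro j; rw [pow_add, Module.End.mul_apply]
      simp only [Matrix.mulVec, dotProduct, Matrix.of_apply, Pi.zero_apply]
      calc ∑ j : Fin (n + 1), φ ((Z ^ ((i : ℕ) + (j : ℕ))) e0) * c j
          = ∑ j : Fin (n + 1), c j • φ ((Z ^ (i : ℕ)) ((Z ^ (j : ℕ)) e0)) :=
            Finset.sum_congr rfl fun j _ => by rw [h2 j, smul_eq_mul, mul_comm]
        _ = 0 := h1
    exact congrFun (Matrix.eq_zero_of_mulVec_eq_zero hdet hmv) i
  obtain ⟨b, hb⟩ : ∃ b : Basis (Fin (n + 1)) F (V × F),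
      ∀ i : Fin (n + 1), b i = (Y ^ (i : ℕ)) e0 :=
    ⟨basisOfLinearIndependentOfCardEqFinrank (indep Y hreg) hcard, fun i => by
      simp [coe_basisOfLinearIndependentOfCardEqFinrank]⟩
  have hdY : Y.charpoly.natDegree = n + 1 := by
    rw [LinearMap.charpoly_natDegree, hW]
  constructor
  · constructor
    · -- (a) → (b)
      rintro ⟨g, hg⟩
      set P := (g.toLinearMap.prodMap (LinearMap.id : F →ₗ[F] F)) with hP
      set Q := (g.symm.toLinearMap.prodMap (LinearMap.id : F →ₗ[F] F)) with hQ
      have hQe : Q e0 = e0 := by simp [hQ, he0]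
      have hφP : ∀ w, φ (P w) = φ w := fun w => by simp [hP, hφdef]
      have hQP : ∀ w, Q (P w) = w := fun w => by
        simp [hP, hQ, LinearMap.prodMap_apply]
      have hpow : ∀ k : ℕ, Y' ^ k = P ∘ₗ (Y ^ k) ∘ₗ Q := by
        intro k
        induction k with
        | zero =>
          apply LinearMap.ext; intro w
          simp [hP, hQ, LinearMap.prodMap_apply]
        | succ k ih =>
          have hstep : Y' ^ (k + 1) = Y' ∘ₗ (Y' ^ k) := by
            rw [pow_succ']; rfl
          rw [hstep, ih, hg]
          apply LinearMap.ext; intro w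
          simp only [LinearMap.comp_apply]
          rw [hQP ((Y ^ k) (Q w)), pow_succ', Module.End.mul_apply]
      constructor
      · -- same characteristic polynomial
        let E : (V × F) ≃ₗ[F] (V × F) := g.prodCongr (LinearEquiv.refl F F)
        have hE : Y' = E.conj Y := by
          apply LinearMap.ext; intro w
          rw [hg]
          simp [E, LinearEquiv.conj_apply, hP, hQ, LinearMap.prodMap_apply,
            LinearEquiv.prodCongr_symm, LinearEquiv.prodCongr_apply]
        rw [hE, LinearEquiv.charpoly_conj]
      · intro i _
        rw [hpow i]
        simp only [LinearMap.comp_apply, hQe, hφP]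
    · -- (b) → (a)
      rintro ⟨hcp, hmom⟩
      have hdY' : Y'.charpoly.natDegree = n + 1 := by
        rw [LinearMap.charpoly_natDegree, hW]
      -- moments agree in all degrees
      have hmomall : ∀ i : ℕ, φ ((Y ^ i) e0) = φ ((Y' ^ i) e0) := by
        intro i
        induction i using Nat.strong_induction_on with
        | _ i IH =>
          rcases le_or_gt i n with h | h
          · exact hmom i h
          · obtain ⟨k, rfl⟩ : ∃ k, i = n + 1 + k := ⟨i - (n + 1), by omega⟩
            rw [aux_pow_rec Y hdY k, hcp, aux_pow_rec Y' hdY' k]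
            simp only [LinearMap.sum_apply, LinearMap.smul_apply, map_sum, map_smul]
            exact Finset.sum_congr rfl fun j hj => by
              rw [IH (j + k) (by have := Finset.mem_range.mp hj; omega)]
      have hreg' : (Matrix.of fun i j : Fin (n + 1) =>
          φ ((Y' ^ ((i : ℕ) + (j : ℕ))) e0)).det ≠ 0 := by
        have hM : (Matrix.of fun i j : Fin (n + 1) => φ ((Y' ^ ((i : ℕ) + (j : ℕ))) e0))
            = Matrix.of fun i j : Fin (n + 1) => φ ((Y ^ ((i : ℕ) + (j : ℕ))) e0) := by
          ext i j; exact (hmomall _).symm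
        rw [hM]; exact hreg
      obtain ⟨b', hb'⟩ : ∃ b' : Basis (Fin (n + 1)) F (V × F),
          ∀ i : Fin (n + 1), b' i = (Y' ^ (i : ℕ)) e0 :=
        ⟨basisOfLinearIndependentOfCardEqFinrank (indep Y' hreg') hcard, fun i => by
          simp [coe_basisOfLinearIndependentOfCardEqFinrank]⟩
      set G : (V × F) ≃ₗ[F] (V × F) := b.equiv b' (Equiv.refl _) with hG
      have hgb : ∀ i : Fin (n + 1), G ((Y ^ (i : ℕ)) e0) = (Y' ^ (i : ℕ)) e0 := by
        intro i
        rw [← hb i, ← hb' i, hG, b.equiv_apply, Equiv.refl_apply]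
      have hgall : ∀ k : ℕ, G ((Y ^ k) e0) = (Y' ^ k) e0 := by
        intro k
        induction k using Nat.strong_induction_on with
        | _ k IH =>
          rcases lt_or_ge k (n + 1) with h | h
          · exact hgb ⟨k, h⟩
          · obtain ⟨m, rfl⟩ : ∃ m, k = n + 1 + m := ⟨k - (n + 1), by omega⟩
            rw [aux_pow_rec Y hdY m, hcp, aux_pow_rec Y' hdY' m]
            simp only [LinearMap.sum_apply, LinearMap.smul_apply, map_sum, map_smul]
            exact Finset.sum_congr rfl fun j hj => by
              rw [IH (j + m) (by have := Finset.mem_range.mp hj; omega)]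
      have hge0 : G e0 = e0 := by simpa using hgall 0
      have hint : Y' ∘ₗ (G : (V × F) →ₗ[F] (V × F)) = (G : (V × F) →ₗ[F] (V × F)) ∘ₗ Y := by
        apply b.ext; intro i
        simp only [LinearMap.comp_apply, LinearEquiv.coe_coe, hb i]
        have h1 : Y ((Y ^ (i : ℕ)) e0) = (Y ^ ((i : ℕ) + 1)) e0 := by
          rw [pow_succ', Module.End.mul_apply]
        have h2 : Y' ((Y' ^ (i : ℕ)) e0) = (Y' ^ ((i : ℕ) + 1)) e0 := by
          rw [pow_succ', Module.End.mul_apply]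
        rw [hgall (i : ℕ), h2, h1, hgall ((i : ℕ) + 1)]
      have hφg : ∀ w, φ (G w) = φ w := by
        have hcomp : φ ∘ₗ (G : (V × F) →ₗ[F] (V × F)) = φ := by
          apply b.ext; intro i
          simp only [LinearMap.comp_apply, LinearEquiv.coe_coe, hb i]
          rw [hgall (i : ℕ), ← hmomall (i : ℕ)]
        intro w; exact LinearMap.congr_fun hcomp w
      have hφgsymm : ∀ w, φ (G.symm w) = φ w := fun w => by
        conv_rhs => rw [← G.apply_symm_apply w, hφg]
      set glin : V →ₗ[F] V :=
        (LinearMap.fst F V F) ∘ₗ (G : (V × F) →ₗ[F] (V × F)) ∘ₗ (LinearMap.inl F V F) with hglin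
      set ginv : V →ₗ[F] V :=
        (LinearMap.fst F V F) ∘ₗ (G.symm : (V × F) →ₗ[F] (V × F)) ∘ₗ (LinearMap.inl F V F)
        with hginv
      have hgfl : ∀ v : V, G (v, 0) = (glin v, 0) := by
        intro v
        have h2 : (G (v, 0)).2 = 0 := by
          have := hφg (v, 0); simpa [hφdef] using this
        have h1 : (G (v, 0)).1 = glin v := by simp [hglin]
        exact Prod.ext h1 h2
      have hgflinv : ∀ v : V, G.symm (v, 0) = (ginv v, 0) := by
        intro v
        have h2 : (G.symm (v, 0)).2 = 0 := by
          have := hφgsymm (v, 0); simpa [hφdef] using this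
        have h1 : (G.symm (v, 0)).1 = ginv v := by simp [hginv]
        exact Prod.ext h1 h2
      have hcmp1 : glin ∘ₗ ginv = LinearMap.id := by
        apply LinearMap.ext; intro v
        have h := hgfl (ginv v)
        rw [← hgflinv v, G.apply_symm_apply] at h
        exact (congrArg Prod.fst h).symm
      have hcmp2 : ginv ∘ₗ glin = LinearMap.id := by
        apply LinearMap.ext; intro v
        have h := hgflinv (glin v)
        rw [← hgfl v, G.symm_apply_apply] at h
        exact (congrArg Prod.fst h).symm
      set g : V ≃ₗ[F] V := LinearEquiv.ofLinear glin ginv hcmp1 hcmp2 with hgdef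
      have hsplit : ∀ v : V, ∀ t : F, ((v, t) : V × F) = (v, 0) + t • e0 := by
        intro v t; simp [he0, Prod.ext_iff]
      have hPeq : g.toLinearMap.prodMap (LinearMap.id : F →ₗ[F] F)
          = (G : (V × F) →ₗ[F] (V × F)) := by
        apply LinearMap.ext; rintro ⟨v, t⟩
        have hG1 : G (v, t) = (glin v, t) := by
          rw [hsplit v t, map_add, map_smul, hgfl, hge0]
          simp [he0, Prod.ext_iff]
        rw [LinearEquiv.coe_coe, hG1]
        simp [LinearMap.prodMap_apply, hgdef]
      have hPseq : g.symm.toLinearMap.prodMap (LinearMap.id : F →ₗ[F] F)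
          = (G.symm : (V × F) →ₗ[F] (V × F)) := by
        apply LinearMap.ext; rintro ⟨v, t⟩
        have hge0s : G.symm e0 = e0 := by
          conv_lhs => rw [← hge0]
          exact G.symm_apply_apply e0
        have hG1 : G.symm (v, t) = (ginv v, t) := by
          rw [hsplit v t, map_add, map_smul, hgflinv, hge0s]
          simp [he0, Prod.ext_iff]
        rw [LinearEquiv.coe_coe, hG1]
        simp [LinearMap.prodMap_apply, hgdef]
      refine ⟨g, ?_⟩
      rw [hPeq, hPseq]
      apply LinearMap.ext; intro w
      have h := LinearMap.congr_fun hint (G.symm w)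
      simp only [LinearMap.comp_apply, LinearEquiv.coe_coe, G.apply_symm_apply] at h ⊢
      exact h
  · -- uniqueness
    intro g₁ g₂ h1 h2
    have key : ∀ (g : V ≃ₗ[F] V),
        Y' = (g.toLinearMap.prodMap (LinearMap.id : F →ₗ[F] F)) ∘ₗ Y ∘ₗ
          (g.symm.toLinearMap.prodMap (LinearMap.id : F →ₗ[F] F)) →
        ∀ k : ℕ, (g.toLinearMap.prodMap (LinearMap.id : F →ₗ[F] F)) ((Y ^ k) e0)
          = (Y' ^ k) e0 := by
      intro g hg k
      set P := (g.toLinearMap.prodMap (LinearMap.id : F →ₗ[F] F)) with hP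
      set Q := (g.symm.toLinearMap.prodMap (LinearMap.id : F →ₗ[F] F)) with hQ
      have hQe : Q e0 = e0 := by simp [hQ, he0]
      have hQP : ∀ w, Q (P w) = w := fun w => by
        simp [hP, hQ, LinearMap.prodMap_apply]
      have hpow : ∀ k : ℕ, Y' ^ k = P ∘ₗ (Y ^ k) ∘ₗ Q := by
        intro k
        induction k with
        | zero =>
          apply LinearMap.ext; intro w
          simp [hP, hQ, LinearMap.prodMap_apply]
        | succ k ih =>
          have hstep : Y' ^ (k + 1) = Y' ∘ₗ (Y' ^ k) := by
            rw [pow_succ']; rfl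
          rw [hstep, ih, hg]
          apply LinearMap.ext; intro w
          simp only [LinearMap.comp_apply]
          rw [hQP ((Y ^ k) (Q w)), pow_succ', Module.End.mul_apply]
      rw [hpow k]
      simp only [LinearMap.comp_apply, hQe]
    have hPP : (g₁.toLinearMap.prodMap (LinearMap.id : F →ₗ[F] F))
        = (g₂.toLinearMap.prodMap (LinearMap.id : F →ₗ[F] F)) := by
      apply b.ext; intro i
      rw [hb i, key g₁ h1 (i : ℕ), key g₂ h2 (i : ℕ)]
    apply LinearEquiv.ext; intro v
    have h := LinearMap.congr_fun hPP (v, 0)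
    simpa [LinearMap.prodMap_apply, Prod.ext_iff] using h
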